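/- For every μ ∈ (0, 1) and all γ₁, γ₂ > 0, the squared Hellinger distance between the Bernoulli distributions with parameters f(μ, γ₁) and f(μ, γ₂) satisfies H²(f(μ, γ₁), f(μ, γ₂)) ≥ (√γ₁ − √γ₂)² · μ(1 − μ) / (2 · max{(γ₁ + γ₂)/2, 1}²). -/

import Mathlib

/-- The declaration probability function `f(μ, γ) = γμ/(1 + (γ − 1)μ)`. -/
noncomputable def declProb (μ γ : ℝ) : ℝ := γ * μ / (1 + (γ - 1) * μ)

/-- Squared Hellinger distance between `Bernoulli(p)` and `Bernoulli(q)`: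
`H²(p, q) = 1 − √(pq) − √((1 − p)(1 − q))`. -/
noncomputable def hellingerSqBernoulli (p q : ℝ) : ℝ :=
  1 - Real.sqrt (p * q) - Real.sqrt ((1 - p) * (1 - q))

set_option maxHeartbeats 1000000 in
/-- For every `μ ∈ (0, 1)` and all `γ₁, γ₂ > 0`, the squared Hellinger
distance between the Bernoulli distributions with parameters `f(μ, γ₁)` and `f(μ, γ₂)`
satisfies `H²(f(μ, γ₁), f(μ, γ₂)) ≥ (√γ₁ − √γ₂)² · μ(1 − μ) / (2 · max{(γ₁+γ₂)/2, 1}²)`. -/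
theorem hellingerSq_declProb_lower_bound
    (μ γ₁ γ₂ : ℝ) (hμ : μ ∈ Set.Ioo (0 : ℝ) 1) (hγ₁ : 0 < γ₁) (hγ₂ : 0 < γ₂) :
    (Real.sqrt γ₁ - Real.sqrt γ₂) ^ 2 * (μ * (1 - μ)) /
        (2 * max ((γ₁ + γ₂) / 2) 1 ^ 2)
      ≤ hellingerSqBernoulli (declProb μ γ₁) (declProb μ γ₂) := by
  obtain ⟨hμ0, hμ1⟩ := hμ
  set a := Real.sqrt γ₁ with ha_def
  set b := Real.sqrt γ₂ with hb_def
  set M := max ((γ₁ + γ₂) / 2) 1 with hM_def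
  have ha : a ^ 2 = γ₁ := Real.sq_sqrt hγ₁.le
  have hb : b ^ 2 = γ₂ := Real.sq_sqrt hγ₂.le
  have ha0 : 0 < a := Real.sqrt_pos.2 hγ₁
  have hb0 : 0 < b := Real.sqrt_pos.2 hγ₂
  have hM1 : (1 : ℝ) ≤ M := le_max_right _ _
  have hMγ : (γ₁ + γ₂) / 2 ≤ M := le_max_left _ _
  have hM0 : 0 < M := lt_of_lt_of_le one_pos hM1
  clear_value a b M
  have e1 : (0 : ℝ) < 1 + (γ₁ - 1) * μ := by nlinarith
  have e2 : (0 : ℝ) < 1 + (γ₂ - 1) * μ := by nlinarith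
  have hdd : (0 : ℝ) < (1 + (γ₁ - 1) * μ) * (1 + (γ₂ - 1) * μ) := mul_pos e1 e2
  set D := Real.sqrt ((1 + (γ₁ - 1) * μ) * (1 + (γ₂ - 1) * μ)) with hD_def
  have hD0 : 0 < D := Real.sqrt_pos.2 hdd
  have hD2 : D ^ 2 = (1 + (γ₁ - 1) * μ) * (1 + (γ₂ - 1) * μ) := Real.sq_sqrt hdd.le
  clear_value D
  set s := a * b * μ + (1 - μ) with hs_def
  have hs0 : 0 < s := by rw [hs_def]; nlinarith [mul_pos (mul_pos ha0 hb0) hμ0]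
  -- key algebraic identity
  have key : D ^ 2 - s ^ 2 = (a - b) ^ 2 * (μ * (1 - μ)) := by
    rw [hD2, hs_def, ← ha, ← hb]; ring
  clear_value s
  have hsD : s ≤ D := by
    nlinarith [key, mul_nonneg (sq_nonneg (a - b)) (by nlinarith : (0:ℝ) ≤ μ * (1 - μ))]
  -- compute the Hellinger distance
  have hH : hellingerSqBernoulli (declProb μ γ₁) (declProb μ γ₂) = (D - s) / D := by
    unfold hellingerSqBernoulli declProb
    have h1 : γ₁ * μ / (1 + (γ₁ - 1) * μ) * (γ₂ * μ / (1 + (γ₂ - 1) * μ))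
        = (a * b * μ / D) ^ 2 := by
      rw [div_pow, hD2, mul_pow, mul_pow, ha, hb]
      field_simp
    have h2 : (1 - γ₁ * μ / (1 + (γ₁ - 1) * μ)) * (1 - γ₂ * μ / (1 + (γ₂ - 1) * μ))
        = ((1 - μ) / D) ^ 2 := by
      rw [div_pow, hD2]
      rw [one_sub_div e1.ne', one_sub_div e2.ne', div_mul_div_comm]
      congr 1 <;> ring
    rw [h1, h2,
      Real.sqrt_sq (div_nonneg (by positivity) hD0.le),
      Real.sqrt_sq (div_nonneg (by linarith) hD0.le), hs_def]
    field_simp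
    ring
  rw [hH]
  have hsum : (1 + (γ₁ - 1) * μ) + (1 + (γ₂ - 1) * μ) ≤ 2 * M := by
    nlinarith [mul_nonneg (sub_nonneg.2 hM1) (sub_pos.2 hμ1).le,
      mul_le_mul_of_nonneg_right hMγ hμ0.le]
  have hA : ((1 + (γ₁ - 1) * μ) + (1 + (γ₂ - 1) * μ)) * ((1 + (γ₁ - 1) * μ) + (1 + (γ₂ - 1) * μ))
      ≤ (2 * M) * (2 * M) := mul_le_mul hsum hsum (by linarith) (by linarith)
  have hprod : D ^ 2 ≤ M ^ 2 := by
    rw [hD2]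
    nlinarith [sq_nonneg ((1 + (γ₁ - 1) * μ) - (1 + (γ₂ - 1) * μ)), hA]
  rw [div_le_div_iff₀ (by positivity) hD0]
  have h1 : 0 ≤ D - s := sub_nonneg.2 hsD
  have h2 : D * (D + s) ≤ 2 * M ^ 2 := by
    nlinarith [mul_le_mul_of_nonneg_left hsD hD0.le, hprod]
  have hkey' : (a - b) ^ 2 * (μ * (1 - μ)) = (D - s) * (D + s) := by
    rw [← key]; ring
  rw [hkey']
  calc (D - s) * (D + s) * D = (D - s) * (D * (D + s)) := by ring
    _ ≤ (D - s) * (2 * M ^ 2) := mul_le_mul_of_nonneg_left h2 h1
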